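/- Let E be a finite set with m := |E| ≥ 1 and let μ be an exchangeable nonnegative function on subsets of E, i.e. μ(F) = c(|F|) for a nonnegative sequence c(0), …, c(m), not all zero. Then μ is cavity-monotone if and only if (1) c is log-concave, i.e. c(k)² ≥ c(k−1)c(k+1) for all 0 < k < m, and (2) the support {0 ≤ k ≤ m : c(k) > 0} is an interval of integers containing both 0 and 1. -/

import Mathlib

set_option linter.unusedSectionVars false
open Finset Filter
open scoped Classical ENNReal

section LocalDefs

variable {V : Type*} [DecidableEq V]

/-- Generating polynomial `Z(w) = Σ_{S ⊆ A} ν(S) ∏_{k∈S} w_k` of a measure `ν`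
on the subsets of the ground set `A`. -/
noncomputable def lZ (A : Finset V) (ν : Finset V → ℝ) (w : V → ℝ) : ℝ :=
  ∑ S ∈ A.powerset, ν S * ∏ k ∈ S, w k

/-- Gibbs--Boltzmann probability of the event `p` under external field `w`. -/
noncomputable def lProb (A : Finset V) (ν : Finset V → ℝ) (w : V → ℝ)
    (p : Finset V → Prop) : ℝ :=
  (∑ S ∈ A.powerset.filter p, ν S * ∏ k ∈ S, w k) / lZ A ν w

/-- The energy `U_ν(w)`, i.e. the expected cardinality of the random subset. -/
noncomputable def lEnergy (A : Finset V) (ν : Finset V → ℝ) (w : V → ℝ) : ℝ :=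
  (∑ S ∈ A.powerset, (S.card : ℝ) * ν S * ∏ k ∈ S, w k) / lZ A ν w

/-- `E^w_ν[|𝓕|·1_{e∈𝓕}]`. -/
noncomputable def lEnergyIn (A : Finset V) (ν : Finset V → ℝ) (e : V) (w : V → ℝ) : ℝ :=
  (∑ S ∈ A.powerset.filter (fun S => e ∈ S), (S.card : ℝ) * ν S * ∏ k ∈ S, w k) / lZ A ν w

/-- The cavity ratio `Γ^e_ν(w') = Z^{/e}(w') / Z^{∖e}(w')`; it only depends on the
coordinates of `w` different from `e`. -/
noncomputable def lGamma (A : Finset V) (ν : Finset V → ℝ) (e : V) (w : V → ℝ) : ℝ :=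
  (∑ S ∈ (A.erase e).powerset, ν (insert e S) * ∏ k ∈ S, w k) /
  (∑ S ∈ (A.erase e).powerset, ν S * ∏ k ∈ S, w k)

/-- Rayleigh property: pairwise negative correlation under every positive external field. -/
def lRayleigh (A : Finset V) (ν : Finset V → ℝ) : Prop :=
  ∀ w : V → ℝ, (∀ k ∈ A, 0 < w k) → ∀ e ∈ A, ∀ f ∈ A, e ≠ f →
    lProb A ν w (fun S => e ∈ S ∧ f ∈ S) ≤
      lProb A ν w (fun S => e ∈ S) * lProb A ν w (fun S => f ∈ S)

/-- Size-increasing property: every ground element positively influences the total size. -/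
def lSizeInc (A : Finset V) (ν : Finset V → ℝ) : Prop :=
  ∀ w : V → ℝ, (∀ k ∈ A, 0 < w k) → ∀ e ∈ A,
    lEnergy A ν w * lProb A ν w (fun S => e ∈ S) < lEnergyIn A ν e w

/-- Cavity-monotone: nonnegative, `ν(∅) > 0`, Rayleigh and size-increasing. -/
def lCavityMonotone (A : Finset V) (ν : Finset V → ℝ) : Prop :=
  (∀ S ∈ A.powerset, 0 ≤ ν S) ∧ 0 < ν ∅ ∧ lRayleigh A ν ∧ lSizeInc A ν

end LocalDefs

section Helpers

variable {V : Type*} [DecidableEq V]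

noncomputable def SAx (c : ℕ → ℝ) (A : Finset V) (r : ℕ) (u : V → ℝ) : ℝ :=
  ∑ S ∈ A.powerset, c (S.card + r) * ∏ k ∈ S, u k

noncomputable def SBx (c : ℕ → ℝ) (A : Finset V) (r : ℕ) (u : V → ℝ) : ℝ :=
  ∑ S ∈ A.powerset, (S.card : ℝ) * c (S.card + r) * ∏ k ∈ S, u k

noncomputable def THx (c : ℕ → ℝ) (A : Finset V) (r s : ℕ) (u : V → ℝ) : ℝ :=
  ((s : ℝ) - (r : ℝ)) * (SAx c A r u * SAx c A s u)
    + SAx c A r u * SBx c A s u - SBx c A r u * SAx c A s u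

lemma SAx_empty (c : ℕ → ℝ) (r : ℕ) (u : V → ℝ) : SAx c (∅ : Finset V) r u = c r := by
  simp [SAx]

lemma SBx_empty (c : ℕ → ℝ) (r : ℕ) (u : V → ℝ) : SBx c (∅ : Finset V) r u = 0 := by
  simp [SBx]

lemma SAx_insert {c : ℕ → ℝ} {A : Finset V} {v : V} (hv : v ∉ A) (r : ℕ) (u : V → ℝ) :
    SAx c (insert v A) r u = SAx c A r u + u v * SAx c A (r + 1) u := by
  unfold SAx
  rw [Finset.sum_powerset_insert hv, Finset.mul_sum]
  congr 1
  refine Finset.sum_congr rfl fun S hS => ?_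
  rw [Finset.mem_powerset] at hS
  have hvS : v ∉ S := fun h => hv (hS h)
  rw [Finset.card_insert_of_notMem hvS, Finset.prod_insert hvS,
    show S.card + 1 + r = S.card + (r + 1) from by omega]
  ring

lemma SBx_insert {c : ℕ → ℝ} {A : Finset V} {v : V} (hv : v ∉ A) (r : ℕ) (u : V → ℝ) :
    SBx c (insert v A) r u
      = SBx c A r u + u v * (SBx c A (r + 1) u + SAx c A (r + 1) u) := by
  unfold SBx SAx
  rw [Finset.sum_powerset_insert hv]
  have key : ∑ S ∈ A.powerset, (((insert v S).card : ℝ) * c ((insert v S).card + r) * ∏ k ∈ insert v S, u k)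
      = ∑ S ∈ A.powerset, u v * ((S.card : ℝ) * c (S.card + (r + 1)) * ∏ k ∈ S, u k
          + c (S.card + (r + 1)) * ∏ k ∈ S, u k) := by
    refine Finset.sum_congr rfl fun S hS => ?_
    rw [Finset.mem_powerset] at hS
    have hvS : v ∉ S := fun h => hv (hS h)
    rw [Finset.card_insert_of_notMem hvS, Finset.prod_insert hvS,
      show S.card + 1 + r = S.card + (r + 1) from by omega]
    push_cast
    ring
  rw [key, ← Finset.mul_sum, Finset.sum_add_distrib]

lemma SAx_erase {c : ℕ → ℝ} {A : Finset V} {e : V} (he : e ∈ A) (r : ℕ) (u : V → ℝ) :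
    SAx c A r u = SAx c (A.erase e) r u + u e * SAx c (A.erase e) (r + 1) u := by
  conv_lhs => rw [← Finset.insert_erase he]
  exact SAx_insert (Finset.notMem_erase e A) r u

lemma SBx_erase {c : ℕ → ℝ} {A : Finset V} {e : V} (he : e ∈ A) (r : ℕ) (u : V → ℝ) :
    SBx c A r u
      = SBx c (A.erase e) r u + u e * (SBx c (A.erase e) (r + 1) u + SAx c (A.erase e) (r + 1) u) := by
  conv_lhs => rw [← Finset.insert_erase he]
  exact SBx_insert (Finset.notMem_erase e A) r u

lemma THx_insert {c : ℕ → ℝ} {A : Finset V} {v : V} (hv : v ∉ A) (r s : ℕ) (u : V → ℝ) :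
    THx c (insert v A) r s u
      = THx c A r s u + u v * (THx c A r (s + 1) u + THx c A (r + 1) s u)
        + (u v) ^ 2 * THx c A (r + 1) (s + 1) u := by
  unfold THx
  simp only [SAx_insert hv, SBx_insert hv]
  push_cast
  ring

lemma SAx_nonneg {m : ℕ} {c : ℕ → ℝ} {A : Finset V} {r : ℕ} {u : V → ℝ}
    (hc : ∀ k ≤ m, 0 ≤ c k) (hA : A.card + r ≤ m) (hu : ∀ k ∈ A, 0 ≤ u k) :
    0 ≤ SAx c A r u := by
  apply Finset.sum_nonneg
  intro S hS
  rw [Finset.mem_powerset] at hS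
  have h1 : S.card + r ≤ m := le_trans (Nat.add_le_add_right (Finset.card_le_card hS) r) hA
  exact mul_nonneg (hc _ h1) (Finset.prod_nonneg fun k hk => hu k (hS hk))

end Helpers

section Ineqs

variable {V : Type*} [DecidableEq V] {m : ℕ} {c : ℕ → ℝ}

lemma c_spread (hnn : ∀ k ≤ m, 0 ≤ c k)
    (hlc : ∀ k, 0 < k → k < m → c (k - 1) * c (k + 1) ≤ c k ^ 2)
    (hint : ∀ j k, j ≤ k → k ≤ m → 0 < c k → 0 < c j) :
    ∀ d r, r + d + 2 ≤ m → c r * c (r + d + 2) ≤ c (r + 1) * c (r + d + 1) := by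
  intro d
  induction d with
  | zero =>
    intro r h
    have h1 := hlc (r + 1) (Nat.succ_pos r) (by omega)
    have e1 : r + 1 - 1 = r := by omega
    rw [e1] at h1
    calc c r * c (r + 0 + 2) = c r * c (r + 1 + 1) := by norm_num
      _ ≤ c (r + 1) ^ 2 := h1
      _ = c (r + 1) * c (r + 0 + 1) := by norm_num [pow_two]
  | succ d ih =>
    intro r h
    have e1 : r + (d + 1) + 2 = r + d + 3 := by omega
    have e2 : r + (d + 1) + 1 = r + d + 2 := by omega
    rw [e1, e2]
    rcases (hnn (r + d + 3) (by omega)).lt_or_eq with hpos | hzero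
    · have h1 := ih r (by omega)
      have h2 := hlc (r + d + 2) (by omega) (by omega)
      have e3 : r + d + 2 - 1 = r + d + 1 := by omega
      have e4 : r + d + 2 + 1 = r + d + 3 := by omega
      rw [e3, e4] at h2
      have hp2 : 0 < c (r + d + 2) := hint _ _ (by omega) (by omega) hpos
      have key : (c r * c (r + d + 3)) * c (r + d + 2)
          ≤ (c (r + 1) * c (r + d + 2)) * c (r + d + 2) := by
        nlinarith [hnn r (by omega), hnn (r + 1) (by omega), hnn (r + d + 1) (by omega),
          hpos.le, hp2.le, mul_le_mul_of_nonneg_right h1 hpos.le,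
          mul_le_mul_of_nonneg_left h2 (hnn (r + 1) (by omega))]
      exact le_of_mul_le_mul_right key hp2
    · rw [← hzero]
      have := mul_nonneg (hnn (r + 1) (by omega)) (hnn (r + d + 2) (by omega))
      simpa using this

lemma SAx_spread (hnn : ∀ k ≤ m, 0 ≤ c k)
    (hlc : ∀ k, 0 < k → k < m → c (k - 1) * c (k + 1) ≤ c k ^ 2)
    (hint : ∀ j k, j ≤ k → k ≤ m → 0 < c k → 0 < c j) :
    ∀ A : Finset V, ∀ u : V → ℝ, (∀ k ∈ A, 0 < u k) → ∀ r s, r ≤ s → s + 2 + A.card ≤ m →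
      SAx c A r u * SAx c A (s + 2) u ≤ SAx c A (r + 1) u * SAx c A (s + 1) u := by
  intro A
  induction A using Finset.induction_on with
  | empty =>
    intro u hu r s hrs hcard
    simp only [SAx_empty]
    obtain ⟨d, rfl⟩ : ∃ d, s = r + d := ⟨s - r, by omega⟩
    have := c_spread hnn hlc hint d r (by simpa using hcard)
    calc c r * c (r + d + 2) ≤ c (r + 1) * c (r + d + 1) := this
      _ = c (r + 1) * c (r + d + 1) := rfl
  | @insert v A hv ih =>
    intro u hu r s hrs hcard
    simp only [SAx_insert hv]
    have hy0 : 0 < u v := hu v (Finset.mem_insert_self v A)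
    have hu' : ∀ k ∈ A, 0 < u k := fun k hk => hu k (Finset.mem_insert_of_mem hk)
    have hA : s + 2 + A.card + 1 ≤ m := by
      rw [Finset.card_insert_of_notMem hv] at hcard; omega
    have h1 := ih u hu' r s hrs (by omega)
    have h2 := ih u hu' (r + 1) (s + 1) (by omega) (by omega)
    have h3 := ih u hu' r (s + 1) (by omega) (by omega)
    have e1 : s + 1 + 2 = s + 3 := by omega
    have e2 : s + 1 + 1 = s + 2 := by omega
    have e3 : r + 1 + 1 = r + 2 := by omega
    rw [e1, e2, e3] at h2
    rw [e1, e2] at h3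
    have h4 : SAx c A r u * SAx c A (s + 3) u ≤ SAx c A (r + 2) u * SAx c A (s + 1) u := by
      rcases eq_or_lt_of_le hrs with rfl | hlt
      · exact h3.trans_eq (by rw [e3]; ring)
      · have h5 := ih u hu' (r + 1) s hlt (by omega)
        rw [e3] at h5
        exact h3.trans h5
    nlinarith [mul_le_mul_of_nonneg_left h4 hy0.le,
      mul_le_mul_of_nonneg_left h2 (mul_nonneg hy0.le hy0.le), h1, hy0.le]

lemma THx_nonneg (hnn : ∀ k ≤ m, 0 ≤ c k) :
    ∀ A : Finset V, ∀ u : V → ℝ, (∀ k ∈ A, 0 < u k) → ∀ r s, r ≤ s → s + A.card ≤ m →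
      0 ≤ THx c A r s u := by
  intro A
  induction A using Finset.induction_on with
  | empty =>
    intro u hu r s hrs hcard
    unfold THx
    simp only [SAx_empty, SBx_empty]
    have h1 : (0 : ℝ) ≤ (s : ℝ) - (r : ℝ) := by
      have : (r : ℝ) ≤ (s : ℝ) := by exact_mod_cast hrs
      linarith
    have h2 : 0 ≤ c r * c s :=
      mul_nonneg (hnn r (by omega)) (hnn s (by simpa using hcard))
    nlinarith
  | @insert v A hv ih =>
    intro u hu r s hrs hcard
    rw [THx_insert hv]
    have hy0 : 0 < u v := hu v (Finset.mem_insert_self v A)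
    have hu' : ∀ k ∈ A, 0 < u k := fun k hk => hu k (Finset.mem_insert_of_mem hk)
    have hA : s + A.card + 1 ≤ m := by
      rw [Finset.card_insert_of_notMem hv] at hcard; omega
    have f0 := ih u hu' r s hrs (by omega)
    have f3 := ih u hu' (r + 1) (s + 1) (by omega) (by omega)
    have fmid : 0 ≤ THx c A r (s + 1) u + THx c A (r + 1) s u := by
      rcases eq_or_lt_of_le hrs with rfl | hlt
      · have : THx c A r (r + 1) u + THx c A (r + 1) r u = 0 := by
          unfold THx; push_cast; ring
        rw [this]
      · have g1 := ih u hu' r (s + 1) (by omega) (by omega)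
        have g2 := ih u hu' (r + 1) s hlt (by omega)
        linarith
    nlinarith [mul_nonneg hy0.le fmid, mul_nonneg (mul_nonneg hy0.le hy0.le) f3]

lemma THx_ge (hnn : ∀ k ≤ m, 0 ≤ c k) :
    ∀ A : Finset V, ∀ u : V → ℝ, (∀ k ∈ A, 0 < u k) → 1 + A.card ≤ m →
      c 0 * c 1 ≤ THx c A 0 1 u := by
  intro A
  induction A using Finset.induction_on with
  | empty =>
    intro u hu hcard
    unfold THx
    simp only [SAx_empty, SBx_empty]
    norm_num
  | @insert v A hv ih =>
    intro u hu hcard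
    rw [THx_insert hv]
    have hy0 : 0 < u v := hu v (Finset.mem_insert_self v A)
    have hu' : ∀ k ∈ A, 0 < u k := fun k hk => hu k (Finset.mem_insert_of_mem hk)
    have hA : 1 + A.card + 1 ≤ m := by
      rw [Finset.card_insert_of_notMem hv] at hcard; omega
    have f0 := ih u hu' (by omega)
    have g1 := THx_nonneg hnn A u hu' 0 2 (by omega) (by omega)
    have g2 := THx_nonneg hnn A u hu' 1 1 (by omega) (by omega)
    have g3 := THx_nonneg hnn A u hu' 1 2 (by omega) (by omega)
    nlinarith [mul_nonneg hy0.le (by linarith : (0:ℝ) ≤ THx c A 0 2 u + THx c A 1 1 u),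
      mul_nonneg (mul_nonneg hy0.le hy0.le) g3]

end Ineqs

section Bridge

variable {V : Type*} [DecidableEq V] {c : ℕ → ℝ} {μ : Finset V → ℝ}

lemma sum_filter_mem {A : Finset V} {e : V} {inst : DecidablePred (fun S : Finset V => e ∈ S)}
    (he : e ∈ A) (F : Finset V → ℝ) :
    ∑ S ∈ @Finset.filter _ (fun S => e ∈ S) inst A.powerset, F S
      = ∑ S ∈ (A.erase e).powerset, F (insert e S) := by
  refine Finset.sum_bij' (fun S _ => S.erase e) (fun S _ => insert e S) ?_ ?_ ?_ ?_ ?_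
  · intro S hS
    rw [Finset.mem_filter, Finset.mem_powerset] at hS
    exact Finset.mem_powerset.mpr (Finset.erase_subset_erase e hS.1)
  · intro S hS
    rw [Finset.mem_powerset] at hS
    rw [Finset.mem_filter, Finset.mem_powerset]
    exact ⟨Finset.insert_subset he (hS.trans (Finset.erase_subset _ _)),
      Finset.mem_insert_self e S⟩
  · intro S hS
    rw [Finset.mem_filter] at hS
    show insert e (S.erase e) = S
    exact Finset.insert_erase hS.2
  · intro S hS
    rw [Finset.mem_powerset] at hS
    show (insert e S).erase e = S
    refine Finset.erase_insert fun hin => ?_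
    exact (Finset.notMem_erase e A) (hS hin)
  · intro S hS
    rw [Finset.mem_filter] at hS
    show F S = F (insert e (S.erase e))
    rw [Finset.insert_erase hS.2]

lemma sum_filter_pair {A : Finset V} {e f : V}
    {inst : DecidablePred (fun S : Finset V => e ∈ S ∧ f ∈ S)}
    (he : e ∈ A) (hf : f ∈ A) (hef : e ≠ f) (F : Finset V → ℝ) :
    ∑ S ∈ @Finset.filter _ (fun S => e ∈ S ∧ f ∈ S) inst A.powerset, F S
      = ∑ S ∈ ((A.erase e).erase f).powerset, F (insert e (insert f S)) := by
  refine Finset.sum_bij' (fun S _ => (S.erase e).erase f) (fun S _ => insert e (insert f S))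
    ?_ ?_ ?_ ?_ ?_
  · intro S hS
    rw [Finset.mem_filter, Finset.mem_powerset] at hS
    exact Finset.mem_powerset.mpr (Finset.erase_subset_erase f (Finset.erase_subset_erase e hS.1))
  · intro S hS
    rw [Finset.mem_powerset] at hS
    rw [Finset.mem_filter, Finset.mem_powerset]
    have hsub : S ⊆ A := hS.trans ((Finset.erase_subset _ _).trans (Finset.erase_subset _ _))
    exact ⟨Finset.insert_subset he (Finset.insert_subset hf hsub),
      Finset.mem_insert_self e _, Finset.mem_insert_of_mem (Finset.mem_insert_self f S)⟩
  · intro S hS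
    rw [Finset.mem_filter] at hS
    show insert e (insert f ((S.erase e).erase f)) = S
    rw [Finset.insert_erase (Finset.mem_erase.mpr ⟨hef.symm, hS.2.2⟩), Finset.insert_erase hS.2.1]
  · intro S hS
    rw [Finset.mem_powerset] at hS
    have hfS : f ∉ S := fun hin => (Finset.notMem_erase f _) (hS hin)
    have heS : e ∉ insert f S := by
      intro hin
      rcases Finset.mem_insert.mp hin with h | h
      · exact hef h
      · exact (Finset.notMem_erase e A) ((Finset.erase_subset _ _) (hS h))
    show ((insert e (insert f S)).erase e).erase f = S
    rw [Finset.erase_insert heS, Finset.erase_insert hfS]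
  · intro S hS
    rw [Finset.mem_filter] at hS
    show F S = F (insert e (insert f ((S.erase e).erase f)))
    rw [Finset.insert_erase (Finset.mem_erase.mpr ⟨hef.symm, hS.2.2⟩), Finset.insert_erase hS.2.1]

lemma Zx_eq (hμ : ∀ F, μ F = c F.card) (A : Finset V) (w : V → ℝ) :
    lZ A μ w = SAx c A 0 w := by
  unfold lZ SAx
  exact Finset.sum_congr rfl fun S _ => by rw [hμ, Nat.add_zero]

lemma EN_eq (hμ : ∀ F, μ F = c F.card) (A : Finset V) (w : V → ℝ) :
    ∑ S ∈ A.powerset, (S.card : ℝ) * μ S * ∏ k ∈ S, w k = SBx c A 0 w := by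
  unfold SBx
  exact Finset.sum_congr rfl fun S _ => by rw [hμ, Nat.add_zero]

lemma Ne_eq (hμ : ∀ F, μ F = c F.card) {A : Finset V} {e : V}
    {inst : DecidablePred (fun S : Finset V => e ∈ S)} (he : e ∈ A) (w : V → ℝ) :
    ∑ S ∈ @Finset.filter _ (fun S => e ∈ S) inst A.powerset, μ S * ∏ k ∈ S, w k
      = w e * SAx c (A.erase e) 1 w := by
  rw [sum_filter_mem he]
  unfold SAx
  rw [Finset.mul_sum]
  refine Finset.sum_congr rfl fun S hS => ?_
  rw [Finset.mem_powerset] at hS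
  have heS : e ∉ S := fun hin => (Finset.notMem_erase e A) (hS hin)
  rw [hμ, Finset.card_insert_of_notMem heS, Finset.prod_insert heS]
  ring

lemma Nef_eq (hμ : ∀ F, μ F = c F.card) {A : Finset V} {e f : V}
    {inst : DecidablePred (fun S : Finset V => e ∈ S ∧ f ∈ S)}
    (he : e ∈ A) (hf : f ∈ A) (hef : e ≠ f) (w : V → ℝ) :
    ∑ S ∈ @Finset.filter _ (fun S => e ∈ S ∧ f ∈ S) inst A.powerset, μ S * ∏ k ∈ S, w k
      = w e * w f * SAx c ((A.erase e).erase f) 2 w := by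
  rw [sum_filter_pair he hf hef]
  unfold SAx
  rw [Finset.mul_sum]
  refine Finset.sum_congr rfl fun S hS => ?_
  rw [Finset.mem_powerset] at hS
  have hfS : f ∉ S := fun hin => (Finset.notMem_erase f _) (hS hin)
  have heS : e ∉ insert f S := by
    intro hin
    rcases Finset.mem_insert.mp hin with h | h
    · exact hef h
    · exact (Finset.notMem_erase e A) ((Finset.erase_subset _ _) (hS h))
  rw [hμ, Finset.card_insert_of_notMem heS, Finset.card_insert_of_notMem hfS,
    Finset.prod_insert heS, Finset.prod_insert hfS,
    show S.card + 1 + 1 = S.card + 2 from by omega]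
  ring

lemma NeIn_eq (hμ : ∀ F, μ F = c F.card) {A : Finset V} {e : V}
    {inst : DecidablePred (fun S : Finset V => e ∈ S)} (he : e ∈ A) (w : V → ℝ) :
    ∑ S ∈ @Finset.filter _ (fun S => e ∈ S) inst A.powerset, (S.card : ℝ) * μ S * ∏ k ∈ S, w k
      = w e * (SBx c (A.erase e) 1 w + SAx c (A.erase e) 1 w) := by
  rw [sum_filter_mem he]
  unfold SBx SAx
  rw [← Finset.sum_add_distrib, Finset.mul_sum]
  refine Finset.sum_congr rfl fun S hS => ?_
  rw [Finset.mem_powerset] at hS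
  have heS : e ∉ S := fun hin => (Finset.notMem_erase e A) (hS hin)
  rw [hμ, Finset.card_insert_of_notMem heS, Finset.prod_insert heS]
  push_cast
  ring

lemma Zx_pos {m : ℕ} (hc0 : 0 < c 0) (hnn : ∀ k ≤ m, 0 ≤ c k) {A : Finset V} (hA : A.card ≤ m)
    (w : V → ℝ) (hw : ∀ k ∈ A, 0 < w k) : 0 < SAx c A 0 w := by
  unfold SAx
  refine lt_of_lt_of_le ?_ (Finset.single_le_sum ?_ (Finset.empty_mem_powerset A))
  · simpa using hc0
  · intro S hS
    rw [Finset.mem_powerset] at hS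
    refine mul_nonneg (hnn _ ?_) (Finset.prod_nonneg fun k hk => (hw k (hS hk)).le)
    exact le_trans (Nat.add_le_add_right (Finset.card_le_card hS) 0) (by omega)

lemma div_le_div_mul_iff {Z n1 n2 n3 : ℝ} (hZ : 0 < Z) :
    n1 / Z ≤ n2 / Z * (n3 / Z) ↔ n1 * Z ≤ n2 * n3 := by
  rw [div_mul_div_comm, div_le_div_iff₀ hZ (mul_pos hZ hZ),
    show n1 * (Z * Z) = n1 * Z * Z from by ring]
  exact mul_le_mul_iff_of_pos_right hZ

lemma div_mul_lt_div_iff {Z n1 n2 n3 : ℝ} (hZ : 0 < Z) :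
    n2 / Z * (n3 / Z) < n1 / Z ↔ n2 * n3 < n1 * Z := by
  rw [div_mul_div_comm, div_lt_div_iff₀ (mul_pos hZ hZ) hZ,
    show n1 * (Z * Z) = n1 * Z * Z from by ring]
  exact mul_lt_mul_iff_of_pos_right hZ

lemma ray_iff (hμ : ∀ F, μ F = c F.card) {A : Finset V} (hc0 : 0 < c 0)
    (hnn : ∀ k ≤ A.card, 0 ≤ c k) :
    lRayleigh A μ ↔ ∀ w : V → ℝ, (∀ k ∈ A, 0 < w k) → ∀ e ∈ A, ∀ f ∈ A, e ≠ f →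
      SAx c ((A.erase e).erase f) 0 w * SAx c ((A.erase e).erase f) 2 w
        ≤ SAx c ((A.erase e).erase f) 1 w ^ 2 := by
  have main : ∀ w : V → ℝ, (∀ k ∈ A, 0 < w k) → ∀ e ∈ A, ∀ f ∈ A, e ≠ f →
      ((lProb A μ w (fun S => e ∈ S ∧ f ∈ S) ≤
        lProb A μ w (fun S => e ∈ S) * lProb A μ w (fun S => f ∈ S)) ↔
       SAx c ((A.erase e).erase f) 0 w * SAx c ((A.erase e).erase f) 2 w
        ≤ SAx c ((A.erase e).erase f) 1 w ^ 2) := by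
    intro w hw e he f hf hef
    have hfe : f ∈ A.erase e := Finset.mem_erase.mpr ⟨hef.symm, hf⟩
    have hef' : e ∈ A.erase f := Finset.mem_erase.mpr ⟨hef, he⟩
    have hx : 0 < w e := hw e he
    have hy : 0 < w f := hw f hf
    have hZ : 0 < lZ A μ w := by
      rw [Zx_eq hμ]; exact Zx_pos hc0 hnn le_rfl w hw
    rw [lProb, lProb, lProb, Nef_eq hμ he hf hef w, Ne_eq hμ he w, Ne_eq hμ hf w, Zx_eq hμ]
    rw [Zx_eq hμ, SAx_erase he 0 w] at hZ
    simp only [Nat.reduceAdd] at hZ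
    rw [SAx_erase hfe 0 w, SAx_erase hfe 1 w] at hZ
    simp only [Nat.reduceAdd] at hZ
    rw [SAx_erase he 0 w]
    simp only [Nat.reduceAdd]
    rw [SAx_erase hfe 0 w, SAx_erase hfe 1 w, SAx_erase hef' 1 w,
      show (A.erase f).erase e = (A.erase e).erase f from Finset.erase_right_comm]
    simp only [Nat.reduceAdd]
    rw [div_le_div_mul_iff hZ]
    set T0 := SAx c ((A.erase e).erase f) 0 w
    set T1 := SAx c ((A.erase e).erase f) 1 w
    set T2 := SAx c ((A.erase e).erase f) 2 w
    constructor
    · intro h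
      by_contra hcon
      push_neg at hcon
      have hneg : w e * w f * (T1 ^ 2 - T0 * T2) < 0 :=
        mul_neg_of_pos_of_neg (mul_pos hx hy) (by linarith)
      nlinarith [h, hneg]
    · intro h
      have hpos : 0 ≤ w e * w f * (T1 ^ 2 - T0 * T2) :=
        mul_nonneg (mul_pos hx hy).le (by linarith)
      nlinarith [hpos]
  unfold lRayleigh
  constructor
  · intro H w hw e he f hf hef
    exact (main w hw e he f hf hef).mp (H w hw e he f hf hef)
  · intro H w hw e he f hf hef
    exact (main w hw e he f hf hef).mpr (H w hw e he f hf hef)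

lemma size_iff (hμ : ∀ F, μ F = c F.card) {A : Finset V} (hc0 : 0 < c 0)
    (hnn : ∀ k ≤ A.card, 0 ≤ c k) :
    lSizeInc A μ ↔ ∀ w : V → ℝ, (∀ k ∈ A, 0 < w k) → ∀ e ∈ A,
      0 < THx c (A.erase e) 0 1 w := by
  have main : ∀ w : V → ℝ, (∀ k ∈ A, 0 < w k) → ∀ e ∈ A,
      ((lEnergy A μ w * lProb A μ w (fun S => e ∈ S) < lEnergyIn A μ e w) ↔
        0 < THx c (A.erase e) 0 1 w) := by
    intro w hw e he
    have hx : 0 < w e := hw e he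
    have hZ : 0 < lZ A μ w := by
      rw [Zx_eq hμ]; exact Zx_pos hc0 hnn le_rfl w hw
    rw [lEnergy, lEnergyIn, lProb, NeIn_eq hμ he w, EN_eq hμ, Ne_eq hμ he w, Zx_eq hμ]
    rw [Zx_eq hμ, SAx_erase he 0 w] at hZ
    simp only [Nat.reduceAdd] at hZ
    rw [SAx_erase he 0 w, SBx_erase he 0 w]
    simp only [Nat.reduceAdd]
    rw [div_mul_lt_div_iff hZ]
    set T0 := SAx c (A.erase e) 0 w with hT0
    set T1 := SAx c (A.erase e) 1 w with hT1
    set U0 := SBx c (A.erase e) 0 w with hU0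
    set U1 := SBx c (A.erase e) 1 w with hU1
    have hid : w e * (U1 + T1) * (T0 + w e * T1) - (U0 + w e * (U1 + T1)) * (w e * T1)
        = w e * THx c (A.erase e) 0 1 w := by
      unfold THx
      rw [← hT0, ← hT1, ← hU0, ← hU1]
      push_cast
      ring
    constructor
    · intro h
      have h1 : 0 < w e * THx c (A.erase e) 0 1 w := by linarith
      by_contra hcon
      push_neg at hcon
      nlinarith [h1, hcon, hx]
    · intro h
      nlinarith [mul_pos hx h, hid]
  unfold lSizeInc
  constructor
  · intro H w hw e he
    exact (main w hw e he).mp (H w hw e he)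
  · intro H w hw e he
    exact (main w hw e he).mpr (H w hw e he)

end Bridge

section Violations

variable {V : Type*} [DecidableEq V]

lemma prod_if_split (P S : Finset V) (t s : ℝ) :
    (∏ x ∈ S, (if x ∈ P then t else s)) = t ^ (S ∩ P).card * s ^ (S \ P).card := by
  conv_lhs => rw [← Finset.sdiff_union_inter S P]
  rw [Finset.prod_union (Finset.disjoint_sdiff_inter S P)]
  have h1 : (∏ x ∈ S \ P, (if x ∈ P then t else s)) = s ^ (S \ P).card := by
    rw [Finset.prod_congr rfl fun x hx => if_neg (Finset.mem_sdiff.mp hx).2, Finset.prod_const]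
  have h2 : (∏ x ∈ S ∩ P, (if x ∈ P then t else s)) = t ^ (S ∩ P).card := by
    rw [Finset.prod_congr rfl fun x hx => if_pos (Finset.mem_inter.mp hx).2, Finset.prod_const]
  rw [h1, h2]
  ring

lemma lc_violation {m : ℕ} {c : ℕ → ℝ} (hnn : ∀ k ≤ m, 0 ≤ c k)
    {C : Finset V} {i : ℕ} (hiC : i ≤ C.card) (hCm : C.card + 2 ≤ m)
    (hviol : c (i + 1) ^ 2 < c i * c (i + 2)) :
    ∃ u : V → ℝ, (∀ x, 0 < u x) ∧
      SAx c C 1 u ^ 2 < SAx c C 0 u * SAx c C 2 u := by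
  obtain ⟨P, hPC, hPcard⟩ := Finset.exists_subset_card_eq hiC
  set M := ∑ S ∈ C.powerset, c (S.card + 1) with hMdef
  have hcards : ∀ S : Finset V, S ⊆ C → ∀ r : ℕ, r ≤ 2 → S.card + r ≤ m := by
    intro S hS r hr
    have := Finset.card_le_card hS
    omega
  have hM0 : 0 ≤ M := Finset.sum_nonneg fun S hS =>
    hnn _ (hcards S (Finset.mem_powerset.mp hS) 1 one_le_two)
  have hδ : 0 < c i * c (i + 2) - c (i + 1) ^ 2 := by linarith
  set t := max 1 ((2 * c (i + 1) * M + M ^ 2 + 1) / (c i * c (i + 2) - c (i + 1) ^ 2)) with htdef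
  have ht1 : (1 : ℝ) ≤ t := le_max_left _ _
  have ht0 : (0 : ℝ) < t := by linarith
  have htδ : 2 * c (i + 1) * M + M ^ 2 + 1 ≤ (c i * c (i + 2) - c (i + 1) ^ 2) * t := by
    have h2 : (2 * c (i + 1) * M + M ^ 2 + 1) / (c i * c (i + 2) - c (i + 1) ^ 2) ≤ t :=
      le_max_right _ _
    rw [div_le_iff₀ hδ] at h2
    linarith
  set u : V → ℝ := fun x => if x ∈ P then t else t⁻¹ with hu
  have hupos : ∀ x, 0 < u x := by
    intro x
    rw [hu]
    dsimp only
    split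
    · exact ht0
    · exact inv_pos.mpr ht0
  have hps : ∀ S : Finset V, (∏ x ∈ S, u x) = t ^ (S ∩ P).card * t⁻¹ ^ (S \ P).card := by
    intro S
    rw [hu]
    exact prod_if_split P S t t⁻¹
  have hprodP : (∏ x ∈ P, u x) = t ^ i := by
    rw [hps P]
    simp [Finset.sdiff_self, hPcard]
  have hterm : ∀ r : ℕ, r ≤ 2 → ∀ S ∈ C.powerset, 0 ≤ c (S.card + r) * ∏ x ∈ S, u x := by
    intro r hr S hS
    rw [Finset.mem_powerset] at hS
    exact mul_nonneg (hnn _ (hcards S hS r hr))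
      (Finset.prod_nonneg fun x _ => (hupos x).le)
  have hSA1nn : 0 ≤ SAx c C 1 u := Finset.sum_nonneg (hterm 1 one_le_two)
  have hSA0nn : 0 ≤ SAx c C 0 u := Finset.sum_nonneg (hterm 0 (by norm_num))
  have hlow0 : c i * t ^ i ≤ SAx c C 0 u := by
    have h := Finset.single_le_sum (hterm 0 (by norm_num)) (Finset.mem_powerset.mpr hPC)
    rw [hPcard, Nat.add_zero, hprodP] at h
    exact h
  have hlow2 : c (i + 2) * t ^ i ≤ SAx c C 2 u := by
    have h := Finset.single_le_sum (hterm 2 le_rfl) (Finset.mem_powerset.mpr hPC)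
    rw [hPcard, hprodP] at h
    exact h
  have hinv0 : (0 : ℝ) ≤ t⁻¹ := by positivity
  have hinv1 : t⁻¹ ≤ 1 := inv_le_one_of_one_le₀ ht1
  have hub : ∀ S : Finset V, S ⊆ C → S ≠ P → (∏ x ∈ S, u x) * t ≤ t ^ i := by
    intro S hS hSP
    rw [hps S]
    have haP : (S ∩ P).card ≤ i := by
      rw [← hPcard]
      exact Finset.card_le_card Finset.inter_subset_right
    rcases lt_or_eq_of_le haP with hlt | heq
    · have h1 : t⁻¹ ^ (S \ P).card ≤ 1 := pow_le_one₀ hinv0 hinv1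
      calc t ^ (S ∩ P).card * t⁻¹ ^ (S \ P).card * t
          ≤ t ^ (S ∩ P).card * 1 * t := by
            exact mul_le_mul_of_nonneg_right
              (mul_le_mul_of_nonneg_left h1 (pow_nonneg ht0.le _)) ht0.le
        _ = t ^ ((S ∩ P).card + 1) := by rw [pow_succ]; ring
        _ ≤ t ^ i := pow_le_pow_right₀ ht1 (by omega)
    · have hSPP : S ∩ P = P :=
        Finset.eq_of_subset_of_card_le Finset.inter_subset_right (by omega)
      have hPS : P ⊆ S := by
        rw [← hSPP]; exact Finset.inter_subset_left
      have hb : 1 ≤ (S \ P).card := by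
        have hne : S \ P ≠ ∅ := fun h =>
          hSP (Finset.Subset.antisymm (Finset.sdiff_eq_empty_iff_subset.mp h) hPS)
        have := Finset.card_pos.mpr (Finset.nonempty_of_ne_empty hne)
        omega
      have h1 : t⁻¹ ^ (S \ P).card ≤ t⁻¹ := by
        calc t⁻¹ ^ (S \ P).card ≤ t⁻¹ ^ 1 := pow_le_pow_of_le_one hinv0 hinv1 hb
          _ = t⁻¹ := pow_one _
      calc t ^ (S ∩ P).card * t⁻¹ ^ (S \ P).card * t
          ≤ t ^ (S ∩ P).card * t⁻¹ * t := by
            exact mul_le_mul_of_nonneg_right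
              (mul_le_mul_of_nonneg_left h1 (pow_nonneg ht0.le _)) ht0.le
        _ = t ^ (S ∩ P).card := by field_simp
        _ = t ^ i := by rw [heq]
  have hupper : SAx c C 1 u * t ≤ c (i + 1) * t ^ i * t + M * t ^ i := by
    unfold SAx
    rw [Finset.sum_mul, ← Finset.sum_erase_add _ _ (Finset.mem_powerset.mpr hPC)]
    have hPterm : c (P.card + 1) * (∏ x ∈ P, u x) * t = c (i + 1) * t ^ i * t := by
      rw [hPcard, hprodP]
    have hrest : ∑ S ∈ C.powerset.erase P, c (S.card + 1) * (∏ x ∈ S, u x) * t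
        ≤ M * t ^ i := by
      calc ∑ S ∈ C.powerset.erase P, c (S.card + 1) * (∏ x ∈ S, u x) * t
          ≤ ∑ S ∈ C.powerset.erase P, c (S.card + 1) * t ^ i := by
            refine Finset.sum_le_sum fun S hS => ?_
            have hSp := Finset.mem_powerset.mp (Finset.mem_of_mem_erase hS)
            have hne := Finset.ne_of_mem_erase hS
            rw [mul_assoc]
            exact mul_le_mul_of_nonneg_left (hub S hSp hne) (hnn _ (hcards S hSp 1 one_le_two))
        _ = (∑ S ∈ C.powerset.erase P, c (S.card + 1)) * t ^ i := by rw [Finset.sum_mul]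
        _ ≤ M * t ^ i := by
            refine mul_le_mul_of_nonneg_right ?_ (pow_nonneg ht0.le i)
            exact Finset.sum_le_sum_of_subset_of_nonneg (Finset.erase_subset _ _)
              fun S hS _ => hnn _ (hcards S (Finset.mem_powerset.mp hS) 1 one_le_two)
    linarith
  refine ⟨u, hupos, ?_⟩
  have hB : (1 : ℝ) ≤ t ^ i := by simpa using pow_le_pow_right₀ ht1 (Nat.zero_le i)
  have step1 : 2 * c (i + 1) * M * t + M ^ 2 + t ≤ (c i * c (i + 2) - c (i + 1) ^ 2) * t ^ 2 := by
    nlinarith [mul_le_mul_of_nonneg_right htδ ht0.le, hM0, ht1, sq_nonneg M]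
  have step2 : (2 * c (i + 1) * M * t + M ^ 2 + t) * (t ^ i * t ^ i)
      ≤ (c i * c (i + 2) - c (i + 1) ^ 2) * t ^ 2 * (t ^ i * t ^ i) :=
    mul_le_mul_of_nonneg_right step1 (by positivity)
  have hkey : (c (i + 1) * t ^ i * t + M * t ^ i) ^ 2
      < (c i * t ^ i) * (c (i + 2) * t ^ i) * t ^ 2 := by
    nlinarith [step2, mul_pos ht0 (mul_pos (pow_pos ht0 i) (pow_pos ht0 i))]
  have hfin : SAx c C 1 u ^ 2 * t ^ 2 < (SAx c C 0 u * SAx c C 2 u) * t ^ 2 := by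
    calc SAx c C 1 u ^ 2 * t ^ 2 = (SAx c C 1 u * t) ^ 2 := by ring
      _ ≤ (c (i + 1) * t ^ i * t + M * t ^ i) ^ 2 := by
          exact pow_le_pow_left₀ (mul_nonneg hSA1nn ht0.le) hupper 2
      _ < (c i * t ^ i) * (c (i + 2) * t ^ i) * t ^ 2 := hkey
      _ ≤ (SAx c C 0 u * SAx c C 2 u) * t ^ 2 := by
          refine mul_le_mul_of_nonneg_right ?_ (by positivity)
          refine mul_le_mul hlow0 hlow2 ?_ hSA0nn
          exact mul_nonneg (hnn _ (by omega)) (pow_nonneg ht0.le i)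
  exact lt_of_mul_lt_mul_right hfin (by positivity)

end Violations

section GapViolation

variable {V : Type*} [DecidableEq V]

lemma gap_violation {m : ℕ} {c : ℕ → ℝ} (hnn : ∀ k ≤ m, 0 ≤ c k)
    {C : Finset V} {j k : ℕ} (hj : 1 ≤ j) (hjk : j < k) (hkm : k ≤ m)
    (hCcard : C.card + 2 = m)
    (hcj : 0 < c (j - 1)) (hck : 0 < c k) (hgap : ∀ i, j ≤ i → i < k → c i = 0) :
    ∃ u : V → ℝ, (∀ x, 0 < u x) ∧
      SAx c C 1 u ^ 2 < SAx c C 0 u * SAx c C 2 u := by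
  set a := k - j with hadef
  have ha1 : 1 ≤ a := by omega
  obtain ⟨P, hPC, hPcard⟩ := Finset.exists_subset_card_eq (show j - 1 ≤ C.card by omega)
  have hQex : a - 1 ≤ (C \ P).card := by
    rw [Finset.card_sdiff_of_subset hPC, hPcard]
    omega
  obtain ⟨Q, hQCP, hQcard⟩ := Finset.exists_subset_card_eq hQex
  have hQC : Q ⊆ C := hQCP.trans (Finset.sdiff_subset)
  have hdPQ : Disjoint P Q := by
    refine Finset.disjoint_left.mpr fun x hxP hxQ => ?_
    exact (Finset.mem_sdiff.mp (hQCP hxQ)).2 hxP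
  set M := ∑ S ∈ C.powerset, c (S.card + 1) with hMdef
  have hcards : ∀ S : Finset V, S ⊆ C → ∀ r : ℕ, r ≤ 2 → S.card + r ≤ m := by
    intro S hS r hr
    have := Finset.card_le_card hS
    omega
  have hM0 : 0 ≤ M := Finset.sum_nonneg fun S hS =>
    hnn _ (hcards S (Finset.mem_powerset.mp hS) 1 one_le_two)
  have hcc : 0 < c (j - 1) * c k := mul_pos hcj hck
  set τ := max 1 ((M ^ 2 + 1) / (c (j - 1) * c k)) with hτdef
  have hτ1 : (1 : ℝ) ≤ τ := le_max_left _ _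
  have hτ0 : (0 : ℝ) < τ := by linarith
  have hτM : M ^ 2 + 1 ≤ c (j - 1) * c k * τ := by
    have h2 : (M ^ 2 + 1) / (c (j - 1) * c k) ≤ τ := le_max_right _ _
    rw [div_le_iff₀ hcc] at h2
    linarith
  set u : V → ℝ := fun x => if x ∈ P then τ ^ a else τ⁻¹ with hu
  have hτa0 : (0 : ℝ) < τ ^ a := pow_pos hτ0 a
  have hupos : ∀ x, 0 < u x := by
    intro x
    rw [hu]
    dsimp only
    split
    · exact hτa0
    · exact inv_pos.mpr hτ0
  have hps : ∀ S : Finset V, (∏ x ∈ S, u x) = (τ ^ a) ^ (S ∩ P).card * τ⁻¹ ^ (S \ P).card := by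
    intro S
    rw [hu]
    exact prod_if_split P S (τ ^ a) τ⁻¹
  have hinv0 : (0 : ℝ) ≤ τ⁻¹ := by positivity
  have hinv1 : τ⁻¹ ≤ 1 := inv_le_one_of_one_le₀ hτ1
  have hterm : ∀ r : ℕ, r ≤ 2 → ∀ S ∈ C.powerset, 0 ≤ c (S.card + r) * ∏ x ∈ S, u x := by
    intro r hr S hS
    rw [Finset.mem_powerset] at hS
    exact mul_nonneg (hnn _ (hcards S hS r hr))
      (Finset.prod_nonneg fun x _ => (hupos x).le)
  have hSA1nn : 0 ≤ SAx c C 1 u := Finset.sum_nonneg (hterm 1 one_le_two)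
  have hSA0nn : 0 ≤ SAx c C 0 u := Finset.sum_nonneg (hterm 0 (by norm_num))
  -- lower bound for SAx 0 via S = P
  have hprodP : (∏ x ∈ P, u x) = τ ^ (a * (j - 1)) := by
    rw [hps P]
    simp [Finset.sdiff_self, hPcard, ← pow_mul]
  have hlow0 : c (j - 1) * τ ^ (a * (j - 1)) ≤ SAx c C 0 u := by
    have h := Finset.single_le_sum (hterm 0 (by norm_num)) (Finset.mem_powerset.mpr hPC)
    rw [hPcard, Nat.add_zero, hprodP] at h
    exact h
  -- lower bound for SAx 2 * τ^(a-1) via S = P ∪ Q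
  have hPQmem : P ∪ Q ∈ C.powerset := Finset.mem_powerset.mpr (Finset.union_subset hPC hQC)
  have hPQcard : (P ∪ Q).card = j - 1 + (a - 1) := by
    rw [Finset.card_union_of_disjoint hdPQ, hPcard, hQcard]
  have hprodPQ : (∏ x ∈ P ∪ Q, u x) = τ ^ (a * (j - 1)) * τ⁻¹ ^ (a - 1) := by
    rw [hps (P ∪ Q), Finset.union_inter_cancel_left, Finset.union_sdiff_cancel_left hdPQ,
      hPcard, hQcard, ← pow_mul]
  have hcPQ : c ((P ∪ Q).card + 2) = c k := by
    rw [hPQcard, show j - 1 + (a - 1) + 2 = k from by omega]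
  have hlow2 : c k * τ ^ (a * (j - 1)) * τ⁻¹ ^ (a - 1) ≤ SAx c C 2 u := by
    have h := Finset.single_le_sum (hterm 2 le_rfl) hPQmem
    rw [hcPQ, hprodPQ] at h
    calc c k * τ ^ (a * (j - 1)) * τ⁻¹ ^ (a - 1)
        = c k * (τ ^ (a * (j - 1)) * τ⁻¹ ^ (a - 1)) := by ring
      _ ≤ SAx c C 2 u := h
  -- upper bound for each term of SAx 1
  have hub : ∀ S : Finset V, S ⊆ C →
      c (S.card + 1) * (∏ x ∈ S, u x) * τ ^ a ≤ c (S.card + 1) * τ ^ (a * (j - 1)) := by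
    intro S hS
    by_cases hc0 : c (S.card + 1) = 0
    · rw [hc0]
      simp
    · have hcase : S.card + 2 ≤ j ∨ k - 1 ≤ S.card := by
        by_contra hcon
        push_neg at hcon
        exact hc0 (hgap (S.card + 1) (by omega) (by omega))
      have hbound : (∏ x ∈ S, u x) * τ ^ a ≤ τ ^ (a * (j - 1)) := by
        rw [hps S]
        have hpP : (S ∩ P).card ≤ j - 1 := by
          rw [← hPcard]
          exact Finset.card_le_card Finset.inter_subset_right
        rcases hcase with hsmall | hlarge
        · -- S.card + 2 ≤ j
          have hpS : (S ∩ P).card ≤ S.card := Finset.card_le_card Finset.inter_subset_left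
          have h1 : τ⁻¹ ^ (S \ P).card ≤ 1 := pow_le_one₀ hinv0 hinv1
          calc (τ ^ a) ^ (S ∩ P).card * τ⁻¹ ^ (S \ P).card * τ ^ a
              ≤ (τ ^ a) ^ (S ∩ P).card * 1 * τ ^ a := by
                exact mul_le_mul_of_nonneg_right
                  (mul_le_mul_of_nonneg_left h1 (pow_nonneg hτa0.le _)) hτa0.le
            _ = τ ^ (a * (S ∩ P).card + a) := by rw [mul_one, ← pow_mul, ← pow_add]
            _ ≤ τ ^ (a * (j - 1)) := by
                refine pow_le_pow_right₀ hτ1 ?_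
                have : (S ∩ P).card + 1 ≤ j - 1 := by omega
                calc a * (S ∩ P).card + a = a * ((S ∩ P).card + 1) := by ring
                  _ ≤ a * (j - 1) := Nat.mul_le_mul_left a this
        · -- k - 1 ≤ S.card
          have hbcard : a ≤ (S \ P).card := by
            have h2 : (S \ P).card + (S ∩ P).card = S.card := by
              rw [Finset.card_sdiff_add_card_inter]
            omega
          have h1 : τ⁻¹ ^ (S \ P).card ≤ τ⁻¹ ^ a := pow_le_pow_of_le_one hinv0 hinv1 hbcard
          calc (τ ^ a) ^ (S ∩ P).card * τ⁻¹ ^ (S \ P).card * τ ^ a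
              ≤ (τ ^ a) ^ (S ∩ P).card * τ⁻¹ ^ a * τ ^ a := by
                exact mul_le_mul_of_nonneg_right
                  (mul_le_mul_of_nonneg_left h1 (pow_nonneg hτa0.le _)) hτa0.le
            _ = (τ ^ a) ^ (S ∩ P).card * (τ⁻¹ * τ) ^ a := by rw [mul_pow]; ring
            _ = (τ ^ a) ^ (S ∩ P).card := by
                rw [inv_mul_cancel₀ (ne_of_gt hτ0)]
                simp
            _ = τ ^ (a * (S ∩ P).card) := by rw [← pow_mul]
            _ ≤ τ ^ (a * (j - 1)) := pow_le_pow_right₀ hτ1 (Nat.mul_le_mul_left a hpP)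
      calc c (S.card + 1) * (∏ x ∈ S, u x) * τ ^ a
          = c (S.card + 1) * ((∏ x ∈ S, u x) * τ ^ a) := by ring
        _ ≤ c (S.card + 1) * τ ^ (a * (j - 1)) := by
            exact mul_le_mul_of_nonneg_left hbound (hnn _ (hcards S hS 1 one_le_two))
  have hupper : SAx c C 1 u * τ ^ a ≤ M * τ ^ (a * (j - 1)) := by
    unfold SAx
    rw [Finset.sum_mul]
    calc ∑ S ∈ C.powerset, c (S.card + 1) * (∏ x ∈ S, u x) * τ ^ a
        ≤ ∑ S ∈ C.powerset, c (S.card + 1) * τ ^ (a * (j - 1)) :=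
          Finset.sum_le_sum fun S hS => hub S (Finset.mem_powerset.mp hS)
      _ = M * τ ^ (a * (j - 1)) := by rw [hMdef, Finset.sum_mul]
  refine ⟨u, hupos, ?_⟩
  -- combine everything
  set B := τ ^ (a * (j - 1)) with hBdef
  have hB0 : (0 : ℝ) < B := pow_pos hτ0 _
  have h1 : (SAx c C 1 u * τ ^ a) ^ 2 ≤ M ^ 2 * B ^ 2 := by
    nlinarith [pow_le_pow_left₀ (mul_nonneg hSA1nn hτa0.le) hupper 2]
  have h2 : (c (j - 1) * B) * (c k * B * τ⁻¹ ^ (a - 1))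
      ≤ SAx c C 0 u * (SAx c C 2 u) := by
    refine mul_le_mul hlow0 hlow2 ?_ hSA0nn
    positivity
  -- multiply h2 by τ^(a-1) * τ^(a+1)  = τ^(2a) ; note τ⁻¹^(a-1) * τ^(a-1) = 1
  have hτcancel : τ⁻¹ ^ (a - 1) * τ ^ (a - 1) = 1 := by
    rw [← mul_pow, inv_mul_cancel₀ (ne_of_gt hτ0), one_pow]
  have hpowsplit : τ ^ (a - 1) * τ ^ (a + 1) = τ ^ a * τ ^ a := by
    rw [← pow_add, ← pow_add]
    congr 1
    omega
  have hτa1 : τ ≤ τ ^ (a + 1) := by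
    calc τ = τ ^ 1 := (pow_one τ).symm
      _ ≤ τ ^ (a + 1) := pow_le_pow_right₀ hτ1 (by omega)
  have hgoal2 : c (j - 1) * c k * τ * B ^ 2 ≤ SAx c C 0 u * SAx c C 2 u * (τ ^ a * τ ^ a) := by
    have step := mul_le_mul_of_nonneg_right h2
      (show (0:ℝ) ≤ τ ^ (a - 1) * τ ^ (a + 1) from by positivity)
    calc c (j - 1) * c k * τ * B ^ 2
        ≤ c (j - 1) * c k * τ ^ (a + 1) * B ^ 2 := by
          refine mul_le_mul_of_nonneg_right ?_ (by positivity)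
          exact mul_le_mul_of_nonneg_left hτa1 hcc.le
      _ = (c (j - 1) * B) * (c k * B * τ⁻¹ ^ (a - 1)) * (τ ^ (a - 1) * τ ^ (a + 1)) := by
          rw [show (c (j - 1) * B) * (c k * B * τ⁻¹ ^ (a - 1)) * (τ ^ (a - 1) * τ ^ (a + 1))
            = c (j - 1) * c k * τ ^ (a + 1) * B ^ 2 * (τ⁻¹ ^ (a - 1) * τ ^ (a - 1)) from by ring,
            hτcancel, mul_one]
      _ ≤ SAx c C 0 u * SAx c C 2 u * (τ ^ (a - 1) * τ ^ (a + 1)) := step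
      _ = SAx c C 0 u * SAx c C 2 u * (τ ^ a * τ ^ a) := by rw [hpowsplit]
  have hMB : M ^ 2 * B ^ 2 < c (j - 1) * c k * τ * B ^ 2 := by
    have : M ^ 2 < c (j - 1) * c k * τ := by linarith
    exact mul_lt_mul_of_pos_right this (by positivity)
  have hfin : SAx c C 1 u ^ 2 * (τ ^ a * τ ^ a)
      < SAx c C 0 u * SAx c C 2 u * (τ ^ a * τ ^ a) := by
    calc SAx c C 1 u ^ 2 * (τ ^ a * τ ^ a) = (SAx c C 1 u * τ ^ a) ^ 2 := by ring
      _ ≤ M ^ 2 * B ^ 2 := h1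
      _ < c (j - 1) * c k * τ * B ^ 2 := hMB
      _ ≤ SAx c C 0 u * SAx c C 2 u * (τ ^ a * τ ^ a) := hgoal2
  exact lt_of_mul_lt_mul_right hfin (by positivity)

end GapViolation

/-- an exchangeable measure `μ(F) = c(|F|)` is cavity-monotone iff `c` is
log-concave and its support is an integer interval containing `0` and `1`. -/
theorem stmt5 {E : Type*} [Fintype E] [DecidableEq E] (hm : 1 ≤ Fintype.card E)
    (c : ℕ → ℝ) (hnn : ∀ k ≤ Fintype.card E, 0 ≤ c k) (hne : ∃ k ≤ Fintype.card E, c k ≠ 0)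
    (μ : Finset E → ℝ) (hμ : ∀ F : Finset E, μ F = c F.card) :
    lCavityMonotone (Finset.univ : Finset E) μ ↔
      ((∀ k : ℕ, 0 < k → k < Fintype.card E → c (k - 1) * c (k + 1) ≤ c k ^ 2) ∧
        0 < c 0 ∧ 0 < c 1 ∧
        (∀ j k : ℕ, j ≤ k → k ≤ Fintype.card E → 0 < c k → 0 < c j)) := by
  set m := Fintype.card E with hmdef
  have hcardu : (Finset.univ : Finset E).card = m := Finset.card_univ
  constructor
  · rintro ⟨hnn', hv0, hray, hsize⟩
    have hc0 : 0 < c 0 := by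
      rw [hμ ∅] at hv0
      simpa using hv0
    have hnnA : ∀ k ≤ (Finset.univ : Finset E).card, 0 ≤ c k := by
      rw [hcardu]; exact hnn
    have hkey := (ray_iff hμ hc0 hnnA).mp hray
    have hLC : ∀ k : ℕ, 0 < k → k < m → c (k - 1) * c (k + 1) ≤ c k ^ 2 := by
      intro k hk0 hkm
      by_contra hcon
      push_neg at hcon
      obtain ⟨e, f, hef⟩ := Fintype.exists_pair_of_one_lt_card (show 1 < m by omega)
      set C := ((Finset.univ : Finset E).erase e).erase f with hC
      have hfeu : f ∈ (Finset.univ : Finset E).erase e :=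
        Finset.mem_erase.mpr ⟨hef.symm, Finset.mem_univ f⟩
      have hCcard : C.card + 2 = m := by
        have h1 : 0 < ((Finset.univ : Finset E).erase e).card := Finset.card_pos.mpr ⟨f, hfeu⟩
        rw [hC, Finset.card_erase_of_mem hfeu]
        rw [Finset.card_erase_of_mem (Finset.mem_univ e), hcardu] at h1 ⊢
        omega
      obtain ⟨u, hupos, hviol⟩ := lc_violation (m := m) hnn (C := C) (i := k - 1)
        (by omega) (by omega)
        (by rw [show k - 1 + 1 = k from by omega, show k - 1 + 2 = k + 1 from by omega]
            exact hcon)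
      have hray2 := hkey u (fun x _ => hupos x) e (Finset.mem_univ e) f (Finset.mem_univ f) hef
      rw [← hC] at hray2
      linarith
    have hInt : ∀ j k : ℕ, j ≤ k → k ≤ m → 0 < c k → 0 < c j := by
      intro j0 k0 hjk0 hk0m hck0
      by_contra hcj0
      have hcj0' : c j0 = 0 := le_antisymm (not_lt.mp hcj0) (hnn j0 (by omega))
      have hex' : ∃ n, c n = 0 := ⟨j0, hcj0'⟩
      set j := Nat.find hex' with hjdef
      have hcj : c j = 0 := Nat.find_spec hex'
      have hjmin : ∀ i, i < j → c i ≠ 0 := fun i hi => Nat.find_min hex' hi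
      have hj1 : 1 ≤ j := by
        rcases Nat.eq_zero_or_pos j with h0 | h
        · rw [h0] at hcj; linarith
        · exact h
      have hjlek : j ≤ j0 := Nat.find_min' hex' hcj0'
      have hjltk0 : j < k0 := by
        rcases eq_or_lt_of_le (hjlek.trans hjk0) with h | h
        · rw [h] at hcj; linarith
        · exact h
      have hex2 : ∃ n, j < n ∧ n ≤ m ∧ 0 < c n := ⟨k0, hjltk0, hk0m, hck0⟩
      set kk := Nat.find hex2 with hkkdef
      obtain ⟨hjkk, hkkm, hckk⟩ := Nat.find_spec hex2
      have hgap : ∀ i, j ≤ i → i < kk → c i = 0 := by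
        intro i hji hikk
        rcases eq_or_lt_of_le hji with heq | h
        · rw [← heq]; exact hcj
        · have hni := Nat.find_min hex2 hikk
          push_neg at hni
          have him : i ≤ m := by omega
          exact le_antisymm (hni h him) (hnn i him)
      have hcjm1 : 0 < c (j - 1) := by
        have hne' := hjmin (j - 1) (by omega)
        rcases (hnn (j - 1) (by omega)).lt_or_eq with h | h
        · exact h
        · exact absurd h.symm hne'
      obtain ⟨e, f, hef⟩ := Fintype.exists_pair_of_one_lt_card (show 1 < m by omega)
      set C := ((Finset.univ : Finset E).erase e).erase f with hC
      have hfeu : f ∈ (Finset.univ : Finset E).erase e :=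
        Finset.mem_erase.mpr ⟨hef.symm, Finset.mem_univ f⟩
      have hCcard : C.card + 2 = m := by
        have h1 : 0 < ((Finset.univ : Finset E).erase e).card := Finset.card_pos.mpr ⟨f, hfeu⟩
        rw [hC, Finset.card_erase_of_mem hfeu]
        rw [Finset.card_erase_of_mem (Finset.mem_univ e), hcardu] at h1 ⊢
        omega
      obtain ⟨u, hupos, hviol⟩ := gap_violation (m := m) hnn hj1 hjkk hkkm hCcard hcjm1 hckk hgap
      have hray2 := hkey u (fun x _ => hupos x) e (Finset.mem_univ e) f (Finset.mem_univ f) hef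
      rw [← hC] at hray2
      linarith
    have hc1 : 0 < c 1 := by
      by_contra hcon
      have hc1' : c 1 = 0 := le_antisymm (not_lt.mp hcon) (hnn 1 (by omega))
      have hall : ∀ k, 1 ≤ k → k ≤ m → c k = 0 := by
        intro k h1k hkm
        by_contra hk
        have hk' : 0 < c k := (hnn k hkm).lt_of_ne (Ne.symm hk)
        have := hInt 1 k h1k hkm hk'
        linarith
      obtain ⟨e⟩ := Fintype.card_pos_iff.mp (show 0 < Fintype.card E by omega)
      have hsz := (size_iff hμ hc0 hnnA).mp hsize (fun _ => 1) (fun k _ => one_pos) e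
        (Finset.mem_univ e)
      have hcb : ∀ S : Finset E, S ∈ ((Finset.univ : Finset E).erase e).powerset →
          S.card + 1 ≤ m := by
        intro S hS
        rw [Finset.mem_powerset] at hS
        have h2 := Finset.card_le_card hS
        rw [Finset.card_erase_of_mem (Finset.mem_univ e), hcardu] at h2
        omega
      have hT1 : SAx c ((Finset.univ : Finset E).erase e) 1 (fun _ => 1) = 0 := by
        refine Finset.sum_eq_zero fun S hS => ?_
        rw [hall (S.card + 1) (by omega) (hcb S hS), zero_mul]
      have hU1 : SBx c ((Finset.univ : Finset E).erase e) 1 (fun _ => 1) = 0 := by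
        refine Finset.sum_eq_zero fun S hS => ?_
        rw [hall (S.card + 1) (by omega) (hcb S hS)]
        ring
      rw [THx, hT1, hU1] at hsz
      simp at hsz
    exact ⟨hLC, hc0, hc1, hInt⟩
  · rintro ⟨hLC, hc0, hc1, hInt⟩
    have hnnA : ∀ k ≤ (Finset.univ : Finset E).card, 0 ≤ c k := by
      rw [hcardu]; exact hnn
    refine ⟨?_, ?_, ?_, ?_⟩
    · intro S hS
      rw [hμ]
      rw [Finset.mem_powerset] at hS
      have := Finset.card_le_card hS
      exact hnn _ (by omega)
    · rw [hμ]
      simpa using hc0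
    · rw [ray_iff hμ hc0 hnnA]
      intro w hw e he f hf hef
      have hfeu : f ∈ (Finset.univ : Finset E).erase e :=
        Finset.mem_erase.mpr ⟨hef.symm, Finset.mem_univ f⟩
      have h1 : 0 < ((Finset.univ : Finset E).erase e).card := Finset.card_pos.mpr ⟨f, hfeu⟩
      have hCcard : (((Finset.univ : Finset E).erase e).erase f).card + 2 ≤ m := by
        rw [Finset.card_erase_of_mem hfeu]
        rw [Finset.card_erase_of_mem (Finset.mem_univ e), hcardu] at h1 ⊢
        omega
      have hsp := SAx_spread (m := m) hnn hLC hInt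
        (((Finset.univ : Finset E).erase e).erase f) w
        (fun x _ => hw x (Finset.mem_univ x)) 0 0 le_rfl (by omega)
      simp only [Nat.reduceAdd, Nat.zero_add] at hsp
      calc SAx c (((Finset.univ : Finset E).erase e).erase f) 0 w *
            SAx c (((Finset.univ : Finset E).erase e).erase f) 2 w
          ≤ SAx c (((Finset.univ : Finset E).erase e).erase f) 1 w *
            SAx c (((Finset.univ : Finset E).erase e).erase f) 1 w := hsp
        _ = SAx c (((Finset.univ : Finset E).erase e).erase f) 1 w ^ 2 := (sq _).symm
    · rw [size_iff hμ hc0 hnnA]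
      intro w hw e he
      have hcard1 : 1 + ((Finset.univ : Finset E).erase e).card ≤ m := by
        rw [Finset.card_erase_of_mem (Finset.mem_univ e), hcardu]
        omega
      have hge := THx_ge (m := m) hnn ((Finset.univ : Finset E).erase e) w
        (fun x _ => hw x (Finset.mem_univ x)) hcard1
      nlinarith [mul_pos hc0 hc1]
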